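/- Under max-subsidy pricing the grand coalition is core-stable: for all integers NL ≥ 1, NH ≥ 1 and every subgroup with 0 ≤ nL ≤ NL and 0 ≤ nH ≤ NH, if nL ≥ 1 then c(nL, 0)/nL ≥ c(NL, 0)/NL, and if nH ≥ 1 then (c(nL, nH) − c(nL, 0))/nH ≥ (c(NL, NH) − c(NL, 0))/NH; hence no subgroup of players can form a pool in which every member pays strictly less than in the grand coalition. -/

import Mathlib

/-- Average of a concave-type sequence with f 0 = 0 is nonincreasing. -/
lemma avg_antitone (f : ℕ → ℝ) (hf0 : f 0 = 0)
    (hd : ∀ i j : ℕ, i ≤ j → f (j + 1) - f j ≤ f (i + 1) - f i) :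
    ∀ n N : ℕ, 1 ≤ n → n ≤ N → f N / (N : ℝ) ≤ f n / (n : ℝ) := by
  have hsum : ∀ m : ℕ, f m = ∑ i ∈ Finset.range m, (f (i + 1) - f i) := by
    intro m; rw [Finset.sum_range_sub, hf0, sub_zero]
  have step : ∀ k : ℕ, 1 ≤ k → f (k + 1) / ((k : ℝ) + 1) ≤ f k / (k : ℝ) := by
    intro k hk
    have hk0 : (0 : ℝ) < (k : ℝ) := by exact_mod_cast hk
    rw [div_le_div_iff₀ (by positivity) hk0]
    have h1 : (k : ℝ) * (f (k + 1) - f k) ≤ f k := by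
      calc (k : ℝ) * (f (k + 1) - f k)
          = ∑ _i ∈ Finset.range k, (f (k + 1) - f k) := by
            simp [Finset.sum_const, mul_comm]; ring
        _ ≤ ∑ i ∈ Finset.range k, (f (i + 1) - f i) :=
            Finset.sum_le_sum fun i hi =>
              hd i k (le_of_lt (Finset.mem_range.mp hi))
        _ = f k := (hsum k).symm
    nlinarith
  intro n N hn hnN
  induction N, hnN using Nat.le_induction with
  | base => exact le_rfl
  | succ m hm ih =>
    exact le_trans (by exact_mod_cast step m (le_trans hn hm)) ih

/-- Under max-subsidy pricing the grand coalition is core-stable: no subgroup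
offers every one of its members a strictly lower price than the grand coalition. -/
theorem max_subsidy_core_stable
    (c : ℕ → ℕ → ℝ)
    (h0 : c 0 0 = 0)
    (hdimL : ∀ a a' b b' : ℕ, a ≤ a' → b ≤ b' →
      c (a + 1) b - c a b ≥ c (a' + 1) b' - c a' b')
    (hdimH : ∀ a a' b b' : ℕ, a ≤ a' → b ≤ b' →
      c a (b + 1) - c a b ≥ c a' (b' + 1) - c a' b')
    (NL NH : ℕ) (hNL : 1 ≤ NL) (hNH : 1 ≤ NH) :
    ∀ nL nH : ℕ, nL ≤ NL → nH ≤ NH →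
      (1 ≤ nL → c nL 0 / (nL : ℝ) ≥ c NL 0 / (NL : ℝ)) ∧
      (1 ≤ nH → (c nL nH - c nL 0) / (nH : ℝ) ≥
        (c NL NH - c NL 0) / (NH : ℝ)) := by
  intro nL nH hnL hnH
  constructor
  · intro h1
    exact avg_antitone (fun m => c m 0) h0
      (fun i j hij => by have := hdimL i j 0 0 hij le_rfl; linarith)
      nL NL h1 hnL
  · intro h1
    have hnH0 : (0 : ℝ) < (nH : ℝ) := by exact_mod_cast h1
    have hsum2 : ∀ a m : ℕ, c a m - c a 0
        = ∑ b ∈ Finset.range m, (c a (b + 1) - c a b) := by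
      intro a m; rw [Finset.sum_range_sub]
    have A : c NL nH - c NL 0 ≤ c nL nH - c nL 0 := by
      rw [hsum2, hsum2]
      exact Finset.sum_le_sum fun b _ => hdimH nL NL b b hnL le_rfl
    have B : (c NL NH - c NL 0) / (NH : ℝ) ≤ (c NL nH - c NL 0) / (nH : ℝ) :=
      avg_antitone (fun m => c NL m - c NL 0) (by ring)
        (fun i j hij => by have := hdimH NL NL i j le_rfl hij; linarith)
        nH NH h1 hnH
    calc (c NL NH - c NL 0) / (NH : ℝ)
        ≤ (c NL nH - c NL 0) / (nH : ℝ) := B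
      _ ≤ (c nL nH - c nL 0) / (nH : ℝ) := by gcongr
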